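/- arXiv:1102.3975 — 4 statements merged into one kernel-verified Lean document; each statement's English description precedes it below -/
import Mathlib

section
/- Let C be a real symmetric positive semidefinite n×n matrix whose diagonal entries satisfy 0 < C_{ii} ≤ 1 for all i, and let D be the diagonal matrix with entries D_{ii} = (C_{ii})^{-1/2}. Then the smallest eigenvalue of C is at most the smallest eigenvalue of D C D (the correlation matrix obtained by normalizing each variable to unit variance). -/
open scoped Matrix

/-- The smallest eigenvalue of a real symmetric (Hermitian) matrix. -/
noncomputable def lambdaMin {m : Type*} [Fintype m] [DecidableEq m] (A : Matrix m m ℝ) : ℝ :=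
  if hA : A.IsHermitian then ⨅ i, hA.eigenvalues i else 0

/-- The largest eigenvalue of a real symmetric (Hermitian) matrix. -/
noncomputable def lambdaMax {m : Type*} [Fintype m] [DecidableEq m] (A : Matrix m m ℝ) : ℝ :=
  if hA : A.IsHermitian then ⨆ i, hA.eigenvalues i else 0

/-- The principal submatrix of `C` on rows and columns in `S`. -/
def subMat {ι : Type*} (C : Matrix ι ι ℝ) (S : Finset ι) : Matrix S S ℝ :=
  fun i j => C i j

/-- `R²(S) = b_Sᵀ (C_S)⁻¹ b_S`, the squared multiple correlation. -/
noncomputable def R2 {ι : Type*} [Fintype ι] [DecidableEq ι]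
    (C : Matrix ι ι ℝ) (b : ι → ℝ) (S : Finset ι) : ℝ :=
  (fun i : S => b i) ⬝ᵥ (subMat C S)⁻¹ *ᵥ (fun i : S => b i)

/-- `λmin(C,k)`: the smallest eigenvalue of any `k × k` principal submatrix of `C`. -/
noncomputable def lambdaMinK {n : ℕ} (C : Matrix (Fin n) (Fin n) ℝ) (k : ℕ) : ℝ :=
  sInf {x | ∃ S : Finset (Fin n), S.card = k ∧ x = lambdaMin (subMat C S)}

/-- `λmax(C,k)`: the largest eigenvalue of any `k × k` principal submatrix of `C`. -/
noncomputable def lambdaMaxK {n : ℕ} (C : Matrix (Fin n) (Fin n) ℝ) (k : ℕ) : ℝ :=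
  sSup {x | ∃ S : Finset (Fin n), S.card = k ∧ x = lambdaMax (subMat C S)}

/-- `Cov(Res(Z|S), X_m) = b_m - C_{m,S} (C_S)⁻¹ b_S`. -/
noncomputable def resCov {ι : Type*} [Fintype ι] [DecidableEq ι]
    (C : Matrix ι ι ℝ) (b : ι → ℝ) (S : Finset ι) (m : ι) : ℝ :=
  b m - (fun i : S => C m i) ⬝ᵥ ((subMat C S)⁻¹ *ᵥ (fun i : S => b i))

open Matrix in
/-- Rayleigh lower bound: if `c` is below all eigenvalues of a real symmetric matrix `A`,
then `c * (x ⬝ᵥ x) ≤ x ⬝ᵥ A *ᵥ x`. -/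
lemma rayleigh_lb {m : Type*} [Fintype m] [DecidableEq m] {A : Matrix m m ℝ}
    (hA : A.IsHermitian) {c : ℝ} (hc : ∀ i, c ≤ hA.eigenvalues i) (x : m → ℝ) :
    c * (x ⬝ᵥ x) ≤ x ⬝ᵥ A *ᵥ x := by
  classical
  set U : Matrix m m ℝ := (hA.eigenvectorUnitary : Matrix m m ℝ) with hU
  have hUss : U * star U = 1 := (Unitary.mem_iff.mp hA.eigenvectorUnitary.2).2
  set y : m → ℝ := star U *ᵥ x with hy
  have hstar : star U = Uᵀ := by
    rw [Matrix.star_eq_conjTranspose, Matrix.conjTranspose_eq_transpose_of_trivial]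
  have hvm : x ᵥ* U = y := by
    rw [hy, hstar, ← Matrix.vecMul_transpose, Matrix.transpose_transpose]
  have h1 : x ⬝ᵥ x = y ⬝ᵥ y := by
    have : y ⬝ᵥ y = (x ᵥ* U) ⬝ᵥ y := by rw [hvm]
    rw [this, ← Matrix.dotProduct_mulVec, hy, Matrix.mulVec_mulVec, hUss, Matrix.one_mulVec]
  have h2 : x ⬝ᵥ A *ᵥ x = y ⬝ᵥ (Matrix.diagonal hA.eigenvalues) *ᵥ y := by
    have hspec := hA.spectral_theorem
    have hof : Matrix.diagonal ((RCLike.ofReal : ℝ → ℝ) ∘ hA.eigenvalues)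
        = Matrix.diagonal hA.eigenvalues := by
      congr 1
    conv_lhs => rw [hspec]
    rw [Unitary.conjStarAlgAut_apply, ← hU]
    rw [hof, ← Matrix.mulVec_mulVec, ← Matrix.mulVec_mulVec, Matrix.dotProduct_mulVec, hvm, hy]
  rw [h1, h2]
  have hdsum : y ⬝ᵥ (Matrix.diagonal hA.eigenvalues) *ᵥ y
      = ∑ i, hA.eigenvalues i * (y i * y i) := by
    simp [dotProduct, Matrix.mulVec_diagonal, mul_comm, mul_left_comm, mul_assoc]
  rw [hdsum, dotProduct, Finset.mul_sum]
  refine Finset.sum_le_sum fun i _ => ?_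
  exact mul_le_mul_of_nonneg_right (hc i) (mul_self_nonneg _)


/-- Normalizing variables of variance at most 1 to unit variance cannot decrease the
smallest eigenvalue of the covariance matrix: `λ_min(C) ≤ λ_min(D C D)` where
`D = diag((C_{ii})^{-1/2})`. -/

theorem lambdaMin_le_lambdaMin_correlation {n : ℕ}
    (C : Matrix (Fin n) (Fin n) ℝ) (hC : C.PosSemidef)
    (hdiag : ∀ i, 0 < C i i ∧ C i i ≤ 1) :
    lambdaMin C ≤
      lambdaMin (Matrix.diagonal (fun i => (Real.sqrt (C i i))⁻¹) * C *
        Matrix.diagonal (fun i => (Real.sqrt (C i i))⁻¹)) := by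
  classical
  set Dg : Matrix (Fin n) (Fin n) ℝ :=
    Matrix.diagonal (fun i => (Real.sqrt (C i i))⁻¹) with hDg
  have hDgH : Dgᴴ = Dg := by
    rw [Matrix.conjTranspose_eq_transpose_of_trivial, hDg, Matrix.diagonal_transpose]
  have hM : (Dg * C * Dg).PosSemidef := by
    have := hC.mul_mul_conjTranspose_same Dg
    rwa [hDgH] at this
  rw [lambdaMin, lambdaMin, dif_pos hC.1, dif_pos hM.1]
  rcases isEmpty_or_nonempty (Fin n) with he | hne
  · rw [iInf, iInf, Set.range_eq_empty, Set.range_eq_empty]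
  have hl0 : (0:ℝ) ≤ ⨅ i, hC.1.eigenvalues i :=
    le_ciInf fun i => hC.eigenvalues_nonneg i
  refine le_ciInf fun j => ?_
  set v : Fin n → ℝ := ⇑(hM.1.eigenvectorBasis j) with hv
  have hv0 : v ≠ 0 := by
    intro h
    exact hM.1.eigenvectorBasis.orthonormal.ne_zero j (by ext i; exact congr_fun h i)
  have hvv : (0:ℝ) < v ⬝ᵥ v := by
    rcases lt_or_eq_of_le (dotProduct_self_star_nonneg v) with h | h
    · simpa using h
    · exact absurd (dotProduct_self_star_eq_zero.mp (by simpa using h.symm)) hv0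
  have heig : (Dg * C * Dg) *ᵥ v = hM.1.eigenvalues j • v := hM.1.mulVec_eigenvectorBasis j
  have h1 : v ⬝ᵥ ((Dg * C * Dg) *ᵥ v) = hM.1.eigenvalues j * (v ⬝ᵥ v) := by
    rw [heig, dotProduct_smul, smul_eq_mul]
  have h2 : v ⬝ᵥ ((Dg * C * Dg) *ᵥ v) = (Dg *ᵥ v) ⬝ᵥ (C *ᵥ (Dg *ᵥ v)) := by
    rw [← Matrix.mulVec_mulVec, ← Matrix.mulVec_mulVec, Matrix.dotProduct_mulVec]
    congr 1
    rw [← Matrix.vecMul_transpose, hDg, Matrix.diagonal_transpose]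
  have h3 : (⨅ i, hC.1.eigenvalues i) * ((Dg *ᵥ v) ⬝ᵥ (Dg *ᵥ v))
      ≤ (Dg *ᵥ v) ⬝ᵥ (C *ᵥ (Dg *ᵥ v)) :=
    rayleigh_lb hC.1 (fun i => ciInf_le (Finite.bddBelow_range _) i) _
  have h4 : v ⬝ᵥ v ≤ (Dg *ᵥ v) ⬝ᵥ (Dg *ᵥ v) := by
    rw [dotProduct, dotProduct]
    refine Finset.sum_le_sum fun i _ => ?_
    have hpos := (hdiag i).1
    have hs1 : Real.sqrt (C i i) ≤ 1 := by
      rw [show (1:ℝ) = Real.sqrt 1 from (Real.sqrt_one).symm]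
      exact Real.sqrt_le_sqrt (hdiag i).2
    have hs0 : 0 < Real.sqrt (C i i) := Real.sqrt_pos.mpr hpos
    have hinv : 1 ≤ (Real.sqrt (C i i))⁻¹ := (one_le_inv₀ hs0).2 hs1
    have : v i * v i ≤ ((Real.sqrt (C i i))⁻¹ * v i) * ((Real.sqrt (C i i))⁻¹ * v i) := by
      nlinarith [mul_self_nonneg (v i), sub_nonneg.mpr hinv,
        mul_nonneg (mul_nonneg (sub_nonneg.mpr hinv)
          (by linarith : (0:ℝ) ≤ (Real.sqrt (C i i))⁻¹ + 1)) (mul_self_nonneg (v i))]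
    simpa [hDg, Matrix.mulVec_diagonal] using this
  have key : (⨅ i, hC.1.eigenvalues i) * (v ⬝ᵥ v) ≤ hM.1.eigenvalues j * (v ⬝ᵥ v) := by
    calc (⨅ i, hC.1.eigenvalues i) * (v ⬝ᵥ v)
        ≤ (⨅ i, hC.1.eigenvalues i) * ((Dg *ᵥ v) ⬝ᵥ (Dg *ᵥ v)) :=
          mul_le_mul_of_nonneg_left h4 hl0
      _ ≤ (Dg *ᵥ v) ⬝ᵥ (C *ᵥ (Dg *ᵥ v)) := h3
      _ = hM.1.eigenvalues j * (v ⬝ᵥ v) := by rw [← h2, h1]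
  exact le_of_mul_le_mul_right key hvv
end

section
/- Let C be a real symmetric positive definite n×n matrix with unit diagonal and b ∈ ℝⁿ, and let 1 ≤ k ≤ n. Then max over subsets S ⊆ {1,…,n} of size k−1 of R²(S) is at least (1 − 1/(k · λmin(C,k))) times the max over subsets S of size k of R²(S). -/
open scoped Matrix

/-! ### Auxiliary machinery -/

/-- Extension of a vector indexed by a finset to the full index type by zero. -/
noncomputable def extV {ι : Type*} [DecidableEq ι] {S : Finset ι} (x : S → ℝ) : ι → ℝ :=
  fun i => if h : i ∈ S then x ⟨i, h⟩ else 0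

@[simp] lemma extV_coe {ι : Type*} [DecidableEq ι] {S : Finset ι} (x : S → ℝ) (i : S) :
    extV x (i : ι) = x i := by
  simp [extV, i.2]

lemma extV_notmem {ι : Type*} [DecidableEq ι] {S : Finset ι} (x : S → ℝ) {i : ι}
    (h : i ∉ S) : extV x i = 0 := by simp [extV, h]

lemma sum_ext {ι : Type*} [Fintype ι] [DecidableEq ι] {S : Finset ι}
    (x : S → ℝ) (g : ι → ℝ) :
    ∑ i : ι, extV x i * g i = ∑ i : S, x i * g i :=
  calc ∑ i : ι, extV x i * g i
      = ∑ i ∈ S, extV x i * g i :=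
        (Finset.sum_subset (Finset.subset_univ S)
          (fun i _ hi => by rw [extV_notmem x hi, zero_mul])).symm
    _ = ∑ i : S, extV x (i : ι) * g i := (Finset.sum_coe_sort S _).symm
    _ = ∑ i : S, x i * g i := by simp

lemma extV_dot {ι : Type*} [Fintype ι] [DecidableEq ι] {S : Finset ι}
    (x : S → ℝ) (b : ι → ℝ) :
    extV x ⬝ᵥ b = x ⬝ᵥ (fun i : S => b i) :=
  sum_ext x b

lemma extV_quad {ι : Type*} [Fintype ι] [DecidableEq ι] {S : Finset ι}
    (C : Matrix ι ι ℝ) (x y : S → ℝ) :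
    extV x ⬝ᵥ C *ᵥ extV y = x ⬝ᵥ (subMat C S) *ᵥ y := by
  have hrow : ∀ i : ι, (C *ᵥ extV y) i = ∑ j : S, C i j * y j := by
    intro i
    rw [Matrix.mulVec, dotProduct]
    calc ∑ j : ι, C i j * extV y j
        = ∑ j : ι, extV y j * C i j := by simp [mul_comm]
      _ = ∑ j : S, y j * C i j := sum_ext y (fun j => C i j)
      _ = ∑ j : S, C i j * y j := by simp [mul_comm]
  calc extV x ⬝ᵥ C *ᵥ extV y
      = ∑ i : S, x i * (C *ᵥ extV y) i := sum_ext x _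
    _ = ∑ i : S, x i * ∑ j : S, (subMat C S) i j * y j := by
        refine Finset.sum_congr rfl fun i _ => ?_
        rw [hrow (i : ι)]; rfl
    _ = x ⬝ᵥ (subMat C S) *ᵥ y := rfl

lemma subMat_posDef {ι : Type*} [Fintype ι] [DecidableEq ι]
    {C : Matrix ι ι ℝ} (hC : C.PosDef) (S : Finset ι) :
    (subMat C S).PosDef := by
  refine Matrix.PosDef.of_dotProduct_mulVec_pos ?_ ?_
  · have h := hC.1
    show (subMat C S)ᴴ = subMat C S
    ext i j
    have := congrFun (congrFun h (i : ι)) (j : ι)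
    simpa [Matrix.conjTranspose_apply, subMat] using this
  · intro x hx
    have hx' : extV x ≠ 0 := by
      intro h0
      apply hx
      funext i
      have := congrFun h0 (i : ι)
      rwa [extV_coe] at this
    have := hC.dotProduct_mulVec_pos hx'
    have heq : extV x ⬝ᵥ C *ᵥ extV x = x ⬝ᵥ (subMat C S) *ᵥ x := extV_quad C x x
    simpa [heq] using this

/-- Rayleigh-type lower bound for the quadratic form. -/
lemma lambdaMin_quad_le {m : Type*} [Fintype m] [DecidableEq m]
    {A : Matrix m m ℝ} (hA : A.IsHermitian) (x : m → ℝ) :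
    lambdaMin A * (x ⬝ᵥ x) ≤ x ⬝ᵥ A *ᵥ x := by
  rcases isEmpty_or_nonempty m with hm | hm
  · simp [lambdaMin, dif_pos hA, dotProduct, iInf_of_empty, Real.sInf_empty]
  set U : Matrix m m ℝ := (hA.eigenvectorUnitary : Matrix m m ℝ) with hU
  set d : m → ℝ := hA.eigenvalues with hd
  set y : m → ℝ := x ᵥ* U with hy
  have hUU : U * star U = 1 := Matrix.mem_unitaryGroup_iff.mp hA.eigenvectorUnitary.2
  have hstar : star U *ᵥ x = y := by
    rw [Matrix.star_eq_conjTranspose, hy, ← Matrix.mulVec_transpose]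
    congr 1
  have hspec : A = U * Matrix.diagonal d * star U := by
    simpa using hA.spectral_theorem
  have hquad : x ⬝ᵥ A *ᵥ x = ∑ i, d i * (y i)^2 := by
    rw [hspec, ← Matrix.mulVec_mulVec, ← Matrix.mulVec_mulVec, hstar,
      Matrix.dotProduct_mulVec, ← hy]
    simp only [dotProduct, Matrix.mulVec_diagonal]
    exact Finset.sum_congr rfl fun i _ => by ring
  have hnorm : x ⬝ᵥ x = ∑ i, (y i)^2 := by
    have h2 : y ⬝ᵥ y = x ⬝ᵥ x := by
      calc y ⬝ᵥ y = x ⬝ᵥ (U *ᵥ y) := (Matrix.dotProduct_mulVec x U y).symm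
        _ = x ⬝ᵥ ((U * star U) *ᵥ x) := by rw [← hstar, Matrix.mulVec_mulVec]
        _ = x ⬝ᵥ x := by rw [hUU, Matrix.one_mulVec]
    rw [← h2]
    simp [dotProduct, sq]
  rw [hquad, hnorm, Finset.mul_sum]
  refine Finset.sum_le_sum fun i _ => ?_
  have h1 : lambdaMin A ≤ d i := by
    rw [lambdaMin, dif_pos hA]
    exact ciInf_le (Set.Finite.bddBelow (Set.finite_range _)) i
  exact mul_le_mul_of_nonneg_right h1 (sq_nonneg _)

/-- Variational lower bound: `2⟨w,β⟩ − ⟨w, A w⟩ ≤ ⟨β, A⁻¹ β⟩`. -/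
lemma quad_lower {m : Type*} [Fintype m] [DecidableEq m]
    {A : Matrix m m ℝ} (hA : A.PosDef) (β w : m → ℝ) :
    2 * (w ⬝ᵥ β) - w ⬝ᵥ A *ᵥ w ≤ β ⬝ᵥ A⁻¹ *ᵥ β := by
  have hdet : IsUnit A.det := isUnit_iff_ne_zero.mpr hA.det_pos.ne'
  have hAt : Aᵀ = A := hA.1
  set α : m → ℝ := A⁻¹ *ᵥ β with hα
  have hAα : A *ᵥ α = β := by
    rw [hα, Matrix.mulVec_mulVec, Matrix.mul_nonsing_inv A hdet, Matrix.one_mulVec]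
  have hsym : ∀ u v : m → ℝ, u ⬝ᵥ A *ᵥ v = v ⬝ᵥ A *ᵥ u := by
    intro u v
    rw [Matrix.dotProduct_mulVec, ← Matrix.mulVec_transpose, hAt, dotProduct_comm]
  have h1 : α ⬝ᵥ A *ᵥ w = w ⬝ᵥ β := by rw [hsym, hAα]
  have h2 : α ⬝ᵥ β = β ⬝ᵥ A⁻¹ *ᵥ β := by rw [← hα, dotProduct_comm]
  have key : 0 ≤ (α - w) ⬝ᵥ A *ᵥ (α - w) := by simpa using hA.posSemidef.dotProduct_mulVec_nonneg (α - w)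
  have e1 : (α - w) ⬝ᵥ A *ᵥ (α - w) = α ⬝ᵥ β - 2*(w ⬝ᵥ β) + w ⬝ᵥ A *ᵥ w := by
    rw [Matrix.mulVec_sub, hAα, sub_dotProduct, dotProduct_sub,
      dotProduct_sub, h1]
    ring
  linarith [key, e1, h2]

/-- Key "drop one variable" bound:
removing `j` from `S` decreases `R²` by at most `(α j)²`. -/
lemma R2_erase_ge {n : ℕ} {C : Matrix (Fin n) (Fin n) ℝ} (hC : C.PosDef)
    (hdiag : ∀ i, C i i = 1) (b : Fin n → ℝ) (S : Finset (Fin n)) (j : S) :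
    R2 C b S - ((subMat C S)⁻¹ *ᵥ (fun i : S => b i)) j ^ 2 ≤
      R2 C b (S.erase (j : Fin n)) := by
  classical
  set T : Finset (Fin n) := S.erase (j : Fin n) with hT
  have hPDS : (subMat C S).PosDef := subMat_posDef hC S
  have hPDT : (subMat C T).PosDef := subMat_posDef hC T
  set βS : S → ℝ := fun i => b i with hβS
  set βT : T → ℝ := fun i => b i with hβT
  set α : S → ℝ := (subMat C S)⁻¹ *ᵥ βS with hα
  have hdet : IsUnit (subMat C S).det := isUnit_iff_ne_zero.mpr hPDS.det_pos.ne'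
  have hAα : (subMat C S) *ᵥ α = βS := by
    rw [hα, Matrix.mulVec_mulVec, Matrix.mul_nonsing_inv _ hdet, Matrix.one_mulVec]
  -- w : T → ℝ, the restriction of α
  set w : T → ℝ := fun i => α ⟨(i : Fin n), Finset.mem_of_mem_erase i.2⟩ with hw
  -- w' : S → ℝ, α with the j-entry zeroed out
  set w' : S → ℝ := α - (α j) • (Pi.single j 1 : S → ℝ) with hw'
  have hext : extV w = extV w' := by
    funext i
    by_cases hiS : i ∈ S
    · by_cases hij : i = (j : Fin n)
      · have hiT : i ∉ T := by rw [hT, hij]; exact Finset.notMem_erase _ _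
        rw [extV_notmem w hiT, extV, dif_pos hiS, hw']
        have hji : (⟨i, hiS⟩ : S) = j := Subtype.ext hij
        simp [hji, Pi.sub_apply, Pi.smul_apply, Pi.single_apply]
      · have hiT : i ∈ T := Finset.mem_erase.mpr ⟨hij, hiS⟩
        rw [extV, dif_pos hiT, extV, dif_pos hiS, hw, hw']
        have hne : (⟨i, hiS⟩ : S) ≠ j := fun h => hij (congrArg Subtype.val h)
        simp [Pi.single_apply, hne]
    · have hiT : i ∉ T := fun h => hiS (Finset.mem_of_mem_erase h)
      rw [extV_notmem w hiT, extV_notmem w' hiS]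
  -- the quadratic functional over T equals the one over S at w'
  have hQ : 2 * (w ⬝ᵥ βT) - w ⬝ᵥ (subMat C T) *ᵥ w
      = 2 * (w' ⬝ᵥ βS) - w' ⬝ᵥ (subMat C S) *ᵥ w' := by
    have e1 : w ⬝ᵥ βT = w' ⬝ᵥ βS := by
      rw [← extV_dot w b, ← extV_dot w' b, hext]
    have e2 : w ⬝ᵥ (subMat C T) *ᵥ w = w' ⬝ᵥ (subMat C S) *ᵥ w' := by
      rw [← extV_quad C w w, ← extV_quad C w' w', hext]
    rw [e1, e2]
  -- compute the S-side quadratic functional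
  have hsym : ∀ u v : S → ℝ, u ⬝ᵥ (subMat C S) *ᵥ v = v ⬝ᵥ (subMat C S) *ᵥ u := by
    intro u v
    have hAt : (subMat C S)ᵀ = subMat C S := hPDS.1
    rw [Matrix.dotProduct_mulVec, ← Matrix.mulVec_transpose, hAt, dotProduct_comm]
  have hjj : (subMat C S) j j = 1 := hdiag (j : Fin n)
  have he1 : (Pi.single j 1 : S → ℝ) ⬝ᵥ (subMat C S) *ᵥ (Pi.single j 1) = 1 := by
    rw [single_dotProduct, one_mul]
    simp [Matrix.mulVec_single, hjj]
  have he2 : α ⬝ᵥ (subMat C S) *ᵥ (Pi.single j 1 : S → ℝ) = βS j := by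
    rw [hsym, hAα]
    simp [single_dotProduct]
  have he3 : (Pi.single j 1 : S → ℝ) ⬝ᵥ (subMat C S) *ᵥ α = βS j := by
    rw [hAα]
    simp [single_dotProduct]
  have hαβ : α ⬝ᵥ (subMat C S) *ᵥ α = α ⬝ᵥ βS := by rw [hAα]
  have hR2S : R2 C b S = α ⬝ᵥ βS := by
    rw [R2, dotProduct_comm]
  have hQval : 2 * (w' ⬝ᵥ βS) - w' ⬝ᵥ (subMat C S) *ᵥ w' = R2 C b S - (α j)^2 := by
    rw [hw']
    rw [sub_dotProduct, smul_dotProduct, single_dotProduct,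
      Matrix.mulVec_sub, Matrix.mulVec_smul, sub_dotProduct,
      smul_dotProduct, dotProduct_sub, dotProduct_sub,
      dotProduct_smul, dotProduct_smul, hαβ, he1, he2, he3, hR2S]
    simp only [smul_eq_mul, one_mul]
    ring
  -- conclude via the variational bound over T
  have hvar : 2 * (w ⬝ᵥ βT) - w ⬝ᵥ (subMat C T) *ᵥ w ≤ βT ⬝ᵥ (subMat C T)⁻¹ *ᵥ βT :=
    quad_lower hPDT βT w
  rw [hQ, hQval] at hvar
  exact hvar

lemma lambdaMin_pos {m : Type*} [Fintype m] [DecidableEq m] [Nonempty m]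
    {A : Matrix m m ℝ} (hA : A.PosDef) : 0 < lambdaMin A := by
  rw [lambdaMin, dif_pos hA.1, iInf]
  have hmem := (Set.range_nonempty hA.1.eigenvalues).csInf_mem
    (Set.finite_range hA.1.eigenvalues)
  obtain ⟨i, hi⟩ := hmem
  rw [← hi]
  exact hA.eigenvalues_pos i

/-- The best `R²` over subsets of size `k − 1` is at least
`(1 − 1/(k · λmin(C,k)))` times the best `R²` over subsets of size `k`. -/
theorem opt_R2_card_pred_bound {n k : ℕ}
    (C : Matrix (Fin n) (Fin n) ℝ) (b : Fin n → ℝ) (hC : C.PosDef)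
    (hdiag : ∀ i, C i i = 1) (hk1 : 1 ≤ k) (hkn : k ≤ n) :
    (1 - 1 / (k * lambdaMinK C k)) *
        sSup {x | ∃ S : Finset (Fin n), S.card = k ∧ x = R2 C b S} ≤
      sSup {x | ∃ S : Finset (Fin n), S.card = k - 1 ∧ x = R2 C b S} := by
  classical
  set Xk : Set ℝ := {x | ∃ S : Finset (Fin n), S.card = k ∧ x = R2 C b S} with hXk
  set Xk1 : Set ℝ := {x | ∃ S : Finset (Fin n), S.card = k - 1 ∧ x = R2 C b S} with hXk1
  have hfink : Xk.Finite :=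
    (Set.finite_range (R2 C b)).subset (fun x ⟨S, _, hx⟩ => ⟨S, hx.symm⟩)
  have hfink1 : Xk1.Finite :=
    (Set.finite_range (R2 C b)).subset (fun x ⟨S, _, hx⟩ => ⟨S, hx.symm⟩)
  obtain ⟨S0, -, hS0⟩ := Finset.exists_subset_card_eq (s := (Finset.univ : Finset (Fin n))) (n := k)
    (by simpa using hkn)
  have hnek : Xk.Nonempty := ⟨R2 C b S0, S0, hS0, rfl⟩
  obtain ⟨S, hScard, hSval⟩ := hnek.csSup_mem hfink
  -- setup
  have hSne : S.Nonempty := Finset.card_pos.mp (by omega)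
  haveI : Nonempty (↥S) := ⟨⟨hSne.choose, hSne.choose_spec⟩⟩
  set A : Matrix S S ℝ := subMat C S with hA
  have hPD : A.PosDef := subMat_posDef hC S
  set βS : S → ℝ := fun i => b i with hβS
  set α : S → ℝ := A⁻¹ *ᵥ βS with hα
  -- the lambdaMinK bound
  set L : ℝ := lambdaMinK C k with hL
  have hfinE : {x | ∃ S : Finset (Fin n), S.card = k ∧ x = lambdaMin (subMat C S)}.Finite :=
    (Set.finite_range (fun S => lambdaMin (subMat C S))).subset
      (fun x ⟨S, _, hx⟩ => ⟨S, hx.symm⟩)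
  have hLle : L ≤ lambdaMin A := csInf_le hfinE.bddBelow ⟨S, hScard, rfl⟩
  have hLpos : 0 < L := by
    have hEne : {x | ∃ S : Finset (Fin n), S.card = k ∧ x = lambdaMin (subMat C S)}.Nonempty :=
      ⟨lambdaMin A, S, hScard, rfl⟩
    obtain ⟨S1, hS1card, hS1val⟩ := hEne.csInf_mem hfinE
    have hS1ne : S1.Nonempty := Finset.card_pos.mp (by omega)
    haveI : Nonempty (↥S1) := ⟨⟨hS1ne.choose, hS1ne.choose_spec⟩⟩
    rw [hL, lambdaMinK, hS1val]
    exact lambdaMin_pos (subMat_posDef hC S1)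
  -- choose the coordinate with smallest |α j|
  obtain ⟨j, -, hjmin⟩ := Finset.exists_min_image Finset.univ (fun i : S => (α i)^2)
    Finset.univ_nonempty
  -- basic identities
  have hdet : IsUnit A.det := isUnit_iff_ne_zero.mpr hPD.det_pos.ne'
  have hAα : A *ᵥ α = βS := by
    rw [hα, Matrix.mulVec_mulVec, Matrix.mul_nonsing_inv _ hdet, Matrix.one_mulVec]
  have hR2S : R2 C b S = α ⬝ᵥ βS := by
    rw [R2, dotProduct_comm]
  have hαAα : α ⬝ᵥ A *ᵥ α = R2 C b S := by rw [hAα, hR2S]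
  have hR2nonneg : 0 ≤ R2 C b S := by
    have := hPD.inv.posSemidef.dotProduct_mulVec_nonneg βS
    simpa [R2, hβS] using this
  -- Rayleigh and averaging
  have hRay : lambdaMin A * (α ⬝ᵥ α) ≤ R2 C b S := by
    rw [← hαAα]; exact lambdaMin_quad_le hPD.1 α
  have hdotsq : α ⬝ᵥ α = ∑ i : S, (α i)^2 := by
    simp [dotProduct, sq]
  have hcard : (Fintype.card ↥S : ℝ) = (k : ℝ) := by
    rw [Fintype.card_coe, hScard]
  have havg : (k : ℝ) * (α j)^2 ≤ α ⬝ᵥ α := by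
    have hs : ∑ _i : S, (α j)^2 ≤ ∑ i : S, (α i)^2 :=
      Finset.sum_le_sum (fun i _ => hjmin i (Finset.mem_univ i))
    rw [Finset.sum_const, Finset.card_univ, nsmul_eq_mul] at hs
    rw [hdotsq, ← hcard]
    exact hs
  have hdotnonneg : 0 ≤ α ⬝ᵥ α := by
    rw [hdotsq]; exact Finset.sum_nonneg fun i _ => sq_nonneg _
  -- key scalar inequality : (k*L) * (α j)^2 ≤ R2 C b S
  have hkey : ((k : ℝ) * L) * (α j)^2 ≤ R2 C b S := by
    have h1 : L * ((k : ℝ) * (α j)^2) ≤ L * (α ⬝ᵥ α) :=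
      mul_le_mul_of_nonneg_left havg hLpos.le
    have h2 : L * (α ⬝ᵥ α) ≤ lambdaMin A * (α ⬝ᵥ α) :=
      mul_le_mul_of_nonneg_right hLle hdotnonneg
    nlinarith [hRay]
  -- the drop bound
  have hdrop : R2 C b S - (α j)^2 ≤ R2 C b (S.erase (j : Fin n)) := by
    have := R2_erase_ge hC hdiag b S j
    simpa [← hA, ← hβS, ← hα] using this
  have hTcard : (S.erase (j : Fin n)).card = k - 1 := by
    rw [Finset.card_erase_of_mem j.2, hScard]
  have hle1 : R2 C b (S.erase (j : Fin n)) ≤ sSup Xk1 :=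
    le_csSup hfink1.bddAbove ⟨S.erase (j : Fin n), hTcard, rfl⟩
  -- finish
  have hkLpos : 0 < (k : ℝ) * L := by
    have : (0:ℝ) < (k:ℝ) := by exact_mod_cast hk1
    positivity
  have hfrac : (α j)^2 ≤ 1 / ((k : ℝ) * L) * R2 C b S := by
    rw [one_div, inv_mul_eq_div, le_div_iff₀ hkLpos]
    nlinarith [hkey]
  have hfinal : (1 - 1 / ((k : ℝ) * L)) * R2 C b S ≤ R2 C b S - (α j)^2 := by
    have hexp : (1 - 1 / ((k : ℝ) * L)) * R2 C b S
        = R2 C b S - 1 / ((k : ℝ) * L) * R2 C b S := by ring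
    linarith
  calc (1 - 1 / ((k : ℝ) * L)) * sSup Xk
      = (1 - 1 / ((k : ℝ) * L)) * R2 C b S := by rw [hSval]
    _ ≤ R2 C b S - (α j)^2 := hfinal
    _ ≤ R2 C b (S.erase (j : Fin n)) := hdrop
    _ ≤ sSup Xk1 := hle1
end

section
/- Let C be a real symmetric positive definite n×n matrix with unit diagonal and b ∈ ℝⁿ, and let 1 ≤ k′ < k ≤ n satisfy (k′+1) · λmin(C,k) ≥ 1. Then max over subsets S of size k′ of R²(S) is at least (∏_{i=k′+1}^{k} (1 − 1/(i · λmin(C,i)))) times the max over subsets S of size k of R²(S). -/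
open scoped Matrix

namespace ShrinkProof

open Matrix Finset

/-! ### Generic linear-algebra lemmas -/

section Generic
set_option linter.unusedSectionVars false
variable {m : Type*} [Fintype m] [DecidableEq m] {A : Matrix m m ℝ}

lemma dot_mulVec_comm (hA : A.IsHermitian) (u v : m → ℝ) :
    u ⬝ᵥ A *ᵥ v = v ⬝ᵥ A *ᵥ u := by
  have hAT : Aᵀ = A := by
    ext i j
    simpa using (congrFun (congrFun hA j) i).symm
  rw [Matrix.dotProduct_mulVec, ← Matrix.mulVec_transpose, hAT, dotProduct_comm]

/-- variational lower bound: `2 wᵀb - wᵀAw ≤ bᵀA⁻¹b` -/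
lemma quad_le_inv_quad (hA : A.PosDef) (bb w : m → ℝ) :
    2 * (w ⬝ᵥ bb) - w ⬝ᵥ A *ᵥ w ≤ bb ⬝ᵥ A⁻¹ *ᵥ bb := by
  set x := A⁻¹ *ᵥ bb with hx
  have hAx : A *ᵥ x = bb := by
    rw [hx, Matrix.mulVec_mulVec, Matrix.mul_nonsing_inv _ hA.det_pos.ne'.isUnit,
      Matrix.one_mulVec]
  have h0 : (0:ℝ) ≤ (w - x) ⬝ᵥ A *ᵥ (w - x) := by
    have := hA.posSemidef.dotProduct_mulVec_nonneg (w - x)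
    simpa using this
  have hexp : (w - x) ⬝ᵥ A *ᵥ (w - x)
      = w ⬝ᵥ A *ᵥ w - 2 * (w ⬝ᵥ bb) + bb ⬝ᵥ x := by
    rw [Matrix.mulVec_sub, dotProduct_sub, sub_dotProduct, sub_dotProduct,
      hAx]
    have h1 : x ⬝ᵥ A *ᵥ w = w ⬝ᵥ bb := by
      rw [dot_mulVec_comm hA.1, hAx]
    have h2 : w ⬝ᵥ bb = bb ⬝ᵥ w := dotProduct_comm _ _
    have h3 : x ⬝ᵥ bb = bb ⬝ᵥ x := dotProduct_comm _ _
    linarith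
  linarith [hexp ▸ h0]

lemma quad_eigen_expand (hA : A.IsHermitian) (x : m → ℝ) :
    x ⬝ᵥ A *ᵥ x = ∑ j, hA.eigenvalues j * ((star (hA.eigenvectorUnitary : Matrix m m ℝ) *ᵥ x) j)^2
    ∧ x ⬝ᵥ x = ∑ j, ((star (hA.eigenvectorUnitary : Matrix m m ℝ) *ᵥ x) j)^2 := by
  set U : Matrix m m ℝ := (hA.eigenvectorUnitary : Matrix m m ℝ) with hU
  set y := star U *ᵥ x with hy
  have hUstar : star U = Uᵀ := by
    ext i j; simp [Matrix.conjTranspose_apply]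
  have hxUz : ∀ z : m → ℝ, x ⬝ᵥ U *ᵥ z = y ⬝ᵥ z := by
    intro z
    rw [Matrix.dotProduct_mulVec, hy, hUstar, Matrix.mulVec_transpose]
  have hUU : U * star U = 1 := Matrix.mem_unitaryGroup_iff.mp hA.eigenvectorUnitary.2
  constructor
  · conv_lhs => rw [hA.spectral_theorem, Unitary.conjStarAlgAut_apply]
    rw [← Matrix.mulVec_mulVec, ← Matrix.mulVec_mulVec, hxUz]
    have : (Matrix.diagonal (RCLike.ofReal ∘ hA.eigenvalues) : Matrix m m ℝ) *ᵥ y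
        = fun j => hA.eigenvalues j * y j := by
      ext j; simp [Matrix.mulVec_diagonal]
    rw [this, dotProduct]
    exact Finset.sum_congr rfl fun j _ => by ring
  · have : x ⬝ᵥ x = x ⬝ᵥ (U * star U) *ᵥ x := by rw [hUU, Matrix.one_mulVec]
    rw [this, ← Matrix.mulVec_mulVec, hxUz, dotProduct]
    exact Finset.sum_congr rfl fun j _ => by ring

lemma lambdaMin_mul_le_quad [Nonempty m] (hA : A.IsHermitian) (x : m → ℝ) :
    lambdaMin A * (x ⬝ᵥ x) ≤ x ⬝ᵥ A *ᵥ x := by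
  obtain ⟨h1, h2⟩ := quad_eigen_expand hA x
  rw [h1, h2, lambdaMin, dif_pos hA, Finset.mul_sum]
  refine Finset.sum_le_sum fun j _ => ?_
  refine mul_le_mul_of_nonneg_right ?_ (sq_nonneg _)
  exact ciInf_le (Set.Finite.bddBelow (Set.finite_range _)) j

lemma exists_unit_quad_eq_lambdaMin [Nonempty m] (hA : A.IsHermitian) :
    ∃ v : m → ℝ, v ⬝ᵥ v = 1 ∧ v ⬝ᵥ A *ᵥ v = lambdaMin A := by
  obtain ⟨j₀, hj₀⟩ := Finite.exists_min hA.eigenvalues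
  have hmin : lambdaMin A = hA.eigenvalues j₀ := by
    rw [lambdaMin, dif_pos hA]
    exact le_antisymm (ciInf_le (Set.Finite.bddBelow (Set.finite_range _)) j₀) (le_ciInf hj₀)
  have hnorm : ‖hA.eigenvectorBasis j₀‖ = 1 := hA.eigenvectorBasis.orthonormal.1 j₀
  have hvv : (⇑(hA.eigenvectorBasis j₀) : m → ℝ) ⬝ᵥ ⇑(hA.eigenvectorBasis j₀) = 1 := by
    have : (⇑(hA.eigenvectorBasis j₀) : m → ℝ) ⬝ᵥ ⇑(hA.eigenvectorBasis j₀)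
        = ‖hA.eigenvectorBasis j₀‖^2 := by
      rw [← real_inner_self_eq_norm_sq]
      simp only [PiLp.inner_apply, dotProduct, RCLike.inner_apply, conj_trivial, mul_comm]
    rw [this, hnorm, one_pow]
  refine ⟨⇑(hA.eigenvectorBasis j₀), hvv, ?_⟩
  rw [hA.mulVec_eigenvectorBasis j₀, dotProduct_smul, smul_eq_mul, hvv, mul_one, hmin]

lemma lambdaMin_pos [Nonempty m] (hA : A.PosDef) : 0 < lambdaMin A := by
  rw [lambdaMin, dif_pos hA.1]
  obtain ⟨j₀, hj₀⟩ := Finite.exists_min hA.1.eigenvalues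
  calc (0:ℝ) < hA.1.eigenvalues j₀ := hA.eigenvalues_pos j₀
  _ ≤ ⨅ i, hA.1.eigenvalues i := le_ciInf hj₀

end Generic

/-! ### Transfer between subtype vectors and `Finset` sums -/

variable {n : ℕ}

lemma dot_eq_sum (S : Finset (Fin n)) (v w : Fin n → ℝ) :
    (fun i : S => v i) ⬝ᵥ (fun i : S => w i) = ∑ i ∈ S, v i * w i := by
  rw [← Finset.sum_coe_sort S (fun i => v i * w i)]; rfl

lemma quad_eq_sum (C : Matrix (Fin n) (Fin n) ℝ) (S : Finset (Fin n)) (v : Fin n → ℝ) :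
    (fun i : S => v i) ⬝ᵥ (subMat C S) *ᵥ (fun i : S => v i)
      = ∑ i ∈ S, ∑ j ∈ S, v i * (C i j * v j) := by
  calc (fun i : S => v i) ⬝ᵥ (subMat C S) *ᵥ (fun i : S => v i)
      = ∑ i : S, v i * ∑ j : S, C i j * v j := rfl
    _ = ∑ i ∈ S, v i * ∑ j ∈ S, C i j * v j := by
        rw [← Finset.sum_coe_sort S (fun a => v a * ∑ j ∈ S, C a j * v j)]
        exact Finset.sum_congr rfl fun i _ => by
          rw [← Finset.sum_coe_sort S (fun j => C i j * v j)]
    _ = ∑ i ∈ S, ∑ j ∈ S, v i * (C i j * v j) := by simp [Finset.mul_sum]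

lemma sum_subset_supp {S T : Finset (Fin n)} (hST : S ⊆ T) {w : Fin n → ℝ}
    (hsupp : ∀ i ∈ T, i ∉ S → w i = 0) (g : Fin n → ℝ) :
    ∑ i ∈ S, w i * g i = ∑ i ∈ T, w i * g i :=
  Finset.sum_subset hST fun i hi hni => by rw [hsupp i hi hni, zero_mul]

lemma quad_sum_subset {S T : Finset (Fin n)} (hST : S ⊆ T) {w : Fin n → ℝ}
    (hsupp : ∀ i ∈ T, i ∉ S → w i = 0) (C : Matrix (Fin n) (Fin n) ℝ) :
    ∑ i ∈ S, ∑ j ∈ S, w i * (C i j * w j) = ∑ i ∈ T, ∑ j ∈ T, w i * (C i j * w j) := by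
  have inner : ∀ i, ∑ j ∈ S, w i * (C i j * w j) = ∑ j ∈ T, w i * (C i j * w j) := by
    intro i
    exact Finset.sum_subset hST fun j hj hnj => by rw [hsupp j hj hnj]; ring
  rw [Finset.sum_congr rfl fun i _ => inner i]
  exact Finset.sum_subset hST fun i hi hni => by
    rw [Finset.sum_eq_zero fun j _ => by rw [hsupp i hi hni, zero_mul]]

lemma full_quad (C : Matrix (Fin n) (Fin n) ℝ) (w : Fin n → ℝ) :
    w ⬝ᵥ C *ᵥ w = ∑ i ∈ univ, ∑ j ∈ univ, w i * (C i j * w j) := by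
  simp [dotProduct, Matrix.mulVec, Finset.mul_sum]

lemma posDef_subMat {C : Matrix (Fin n) (Fin n) ℝ} (hC : C.PosDef) (S : Finset (Fin n)) :
    (subMat C S).PosDef := by
  have hsub : subMat C S = C.submatrix (fun i : S => (i : Fin n)) (fun i : S => (i : Fin n)) :=
    rfl
  refine Matrix.PosDef.of_dotProduct_mulVec_pos (hsub ▸ hC.1.submatrix _) fun x hx => ?_
  set w : Fin n → ℝ := fun i => if h : i ∈ S then x ⟨i, h⟩ else 0 with hw
  have hxw : (fun i : S => w i) = x := by funext i; simp [hw]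
  have hw0 : w ≠ 0 := by
    intro h
    apply hx
    funext i
    have := congrFun h i
    simpa [hw, i.2] using this
  have hsupp : ∀ i ∈ (univ : Finset (Fin n)), i ∉ S → w i = 0 := fun i _ hi => by simp [hw, hi]
  have hq : x ⬝ᵥ (subMat C S) *ᵥ x = w ⬝ᵥ C *ᵥ w := by
    rw [← hxw, quad_eq_sum, quad_sum_subset (Finset.subset_univ S) hsupp, full_quad]
  have hpos := hC.dotProduct_mulVec_pos hw0
  simp only [star_trivial] at hpos ⊢
  rw [hq]
  exact hpos

lemma lambdaMin_subset {C : Matrix (Fin n) (Fin n) ℝ} (hC : C.PosDef)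
    {S T : Finset (Fin n)} (hST : S ⊆ T) (hS : S.Nonempty) :
    lambdaMin (subMat C T) ≤ lambdaMin (subMat C S) := by
  haveI : Nonempty S := ⟨⟨hS.choose, hS.choose_spec⟩⟩
  haveI : Nonempty T := ⟨⟨hS.choose, hST hS.choose_spec⟩⟩
  obtain ⟨v, hvv, hvq⟩ := exists_unit_quad_eq_lambdaMin (posDef_subMat hC S).1
  set w : Fin n → ℝ := fun i => if h : i ∈ S then v ⟨i, h⟩ else 0 with hw
  have hvw : (fun i : S => w i) = v := by funext i; simp [hw]
  have hsupp : ∀ i ∈ T, i ∉ S → w i = 0 := fun i _ hi => by simp [hw, hi]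
  have hq : (fun i : T => w i) ⬝ᵥ (subMat C T) *ᵥ (fun i : T => w i) = lambdaMin (subMat C S) := by
    rw [quad_eq_sum, ← quad_sum_subset hST hsupp, ← quad_eq_sum, hvw, hvq]
  have hn : (fun i : T => w i) ⬝ᵥ (fun i : T => w i) = 1 := by
    rw [dot_eq_sum, ← sum_subset_supp hST hsupp w, ← dot_eq_sum, hvw, hvv]
  have := lambdaMin_mul_le_quad (posDef_subMat hC T).1 (fun i : T => w i)
  rw [hq, hn, mul_one] at this
  exact this

lemma exists_card_finset (i : ℕ) (hi : i ≤ n) : ∃ S : Finset (Fin n), S.card = i := by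
  obtain ⟨S, -, hS⟩ := Finset.exists_subset_card_eq (s := (univ : Finset (Fin n))) (by simpa using hi : i ≤ (univ : Finset (Fin n)).card)
  exact ⟨S, hS⟩

lemma lambdaMinK_le {C : Matrix (Fin n) (Fin n) ℝ} (hC : C.PosDef)
    {i : ℕ} (hi : 1 ≤ i) {S : Finset (Fin n)} (hScard : S.card = i) :
    lambdaMinK C i ≤ lambdaMin (subMat C S) := by
  apply csInf_le
  · refine ⟨0, fun x hx => ?_⟩
    obtain ⟨S', hS', rfl⟩ := hx
    haveI : Nonempty S' := by
      have : 0 < S'.card := hS' ▸ hi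
      obtain ⟨a, ha⟩ := Finset.card_pos.mp this
      exact ⟨⟨a, ha⟩⟩
    exact (lambdaMin_pos (posDef_subMat hC S')).le
  · exact ⟨S, hScard, rfl⟩

lemma lambdaMinK_mono {C : Matrix (Fin n) (Fin n) ℝ} (hC : C.PosDef)
    {i k : ℕ} (hi : 1 ≤ i) (hik : i ≤ k) (hkn : k ≤ n) :
    lambdaMinK C k ≤ lambdaMinK C i := by
  obtain ⟨S₀, hS₀⟩ := exists_card_finset (n := n) i (hik.trans hkn)
  refine le_csInf ⟨lambdaMin (subMat C S₀), S₀, hS₀, rfl⟩ ?_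
  rintro x ⟨S, hS, rfl⟩
  obtain ⟨T, hST, hT⟩ := Finset.exists_superset_card_eq (s := S) (hS ▸ hik) (by simpa using hkn)
  calc lambdaMinK C k ≤ lambdaMin (subMat C T) := lambdaMinK_le hC (hi.trans hik) hT
    _ ≤ lambdaMin (subMat C S) :=
        lambdaMin_subset hC hST (Finset.card_pos.mp (hS ▸ hi))


lemma R2_nonneg {C : Matrix (Fin n) (Fin n) ℝ} (hC : C.PosDef) (b : Fin n → ℝ)
    (S : Finset (Fin n)) : 0 ≤ R2 C b S := by
  have := ((posDef_subMat hC S).inv).posSemidef.dotProduct_mulVec_nonneg (fun i : S => b i)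
  simpa [R2] using this

/-- Core step: removing a well-chosen element of `S` keeps most of `R²`. -/
lemma step_lemma {C : Matrix (Fin n) (Fin n) ℝ} (hC : C.PosDef) (hdiag : ∀ i, C i i = 1)
    (b : Fin n → ℝ) {S : Finset (Fin n)} (hS2 : 2 ≤ S.card) :
    ∃ m ∈ S, (1 - 1 / (S.card * lambdaMin (subMat C S))) * R2 C b S ≤ R2 C b (S.erase m) := by
  haveI : Nonempty S := by
    obtain ⟨a, ha⟩ := Finset.card_pos.mp (by omega : 0 < S.card)
    exact ⟨⟨a, ha⟩⟩
  set A := subMat C S with hA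
  have hApd : A.PosDef := posDef_subMat hC S
  set lam := lambdaMin A with hlam
  have hlam0 : 0 < lam := lambdaMin_pos hApd
  set bS : S → ℝ := fun i : S => b i with hbS
  set x : S → ℝ := A⁻¹ *ᵥ bS with hx
  have hAx : A *ᵥ x = bS := by
    rw [hx, Matrix.mulVec_mulVec, Matrix.mul_nonsing_inv _ hApd.det_pos.ne'.isUnit,
      Matrix.one_mulVec]
  set R : ℝ := R2 C b S with hR
  have hRx : R = bS ⬝ᵥ x := rfl
  have hxAx : x ⬝ᵥ A *ᵥ x = R := by rw [hAx, dotProduct_comm, hRx]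
  have hR0 : 0 ≤ R := R2_nonneg hC b S
  have hcard0 : (0:ℝ) < (S.card : ℝ) := by positivity
  -- pigeonhole: some coordinate of x is small
  have hpig : ∃ m₀ : S, (x m₀)^2 ≤ R / (S.card * lam) := by
    by_contra hcon
    push_neg at hcon
    have hsum : ∑ _m : S, R / (S.card * lam) < ∑ m : S, (x m)^2 :=
      Finset.sum_lt_sum_of_nonempty Finset.univ_nonempty (fun m _ => hcon m)
    have hconst : ∑ _m : S, R / (S.card * lam) = R / lam := by
      rw [Finset.sum_const, Finset.card_univ, Fintype.card_coe, nsmul_eq_mul]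
      field_simp
    have hxx : x ⬝ᵥ x = ∑ m : S, (x m)^2 := by
      rw [dotProduct]
      exact Finset.sum_congr rfl fun m _ => by ring
    have hq := lambdaMin_mul_le_quad hApd.1 x
    rw [hxAx, ← hlam, hxx] at hq
    rw [hconst] at hsum
    have : R / lam * lam = R := by field_simp
    nlinarith
  obtain ⟨m₀, hm₀⟩ := hpig
  refine ⟨(m₀ : Fin n), m₀.2, ?_⟩
  -- the modified optimal vector
  set u : S → ℝ := Pi.single m₀ (x m₀) with hu
  set x' : S → ℝ := x - u with hx'
  have hx'm₀ : x' m₀ = 0 := by simp [hx', hu]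
  -- key identity : 2 x'ᵀ bS - x'ᵀ A x' = R - (x m₀)²
  have hub : u ⬝ᵥ bS = x m₀ * bS m₀ := single_dotProduct bS (x m₀) m₀
  have huAx : u ⬝ᵥ A *ᵥ x = x m₀ * bS m₀ := by
    rw [hAx]; exact single_dotProduct bS (x m₀) m₀
  have hxAu : x ⬝ᵥ A *ᵥ u = x m₀ * bS m₀ := by
    rw [dot_mulVec_comm hApd.1]; exact huAx
  have huAu : u ⬝ᵥ A *ᵥ u = (x m₀)^2 := by
    have hAu : A *ᵥ u = fun i => A i m₀ * x m₀ := Matrix.mulVec_single ..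
    rw [hAu, hu, single_dotProduct]
    have : A m₀ m₀ = 1 := hdiag (m₀ : Fin n)
    rw [this]; ring
  have hkey : 2 * (x' ⬝ᵥ bS) - x' ⬝ᵥ A *ᵥ x' = R - (x m₀)^2 := by
    rw [hx']
    rw [sub_dotProduct, Matrix.mulVec_sub, dotProduct_sub, sub_dotProduct,
      sub_dotProduct, hub, hxAx, huAx, hxAu, huAu]
    have : x ⬝ᵥ bS = R := by rw [hRx, dotProduct_comm]
    rw [this]
    ring
  -- transfer to the erased set
  set T := S.erase (m₀ : Fin n) with hT
  have hTS : T ⊆ S := Finset.erase_subset _ _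
  set w : Fin n → ℝ := fun i => if h : i ∈ S then x' ⟨i, h⟩ else 0 with hw
  have hwx' : (fun i : S => w i) = x' := by funext i; simp [hw]
  have hsupp : ∀ i ∈ S, i ∉ T → w i = 0 := by
    intro i hiS hiT
    have heq : i = (m₀ : Fin n) := by
      by_contra hne
      exact hiT (Finset.mem_erase.mpr ⟨hne, hiS⟩)
    simp only [hw, dif_pos hiS]
    have h2 : (⟨i, hiS⟩ : S) = m₀ := Subtype.ext heq
    rw [h2, hx'm₀]
  have hq : (fun i : T => w i) ⬝ᵥ (subMat C T) *ᵥ (fun i : T => w i) = x' ⬝ᵥ A *ᵥ x' := by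
    rw [quad_eq_sum, quad_sum_subset hTS hsupp, ← quad_eq_sum, hwx']
  have hd : (fun i : T => w i) ⬝ᵥ (fun i : T => b i) = x' ⬝ᵥ bS := by
    rw [dot_eq_sum, sum_subset_supp hTS hsupp b, ← dot_eq_sum, hwx']
  have hvar := quad_le_inv_quad (posDef_subMat hC T) (fun i : T => b i) (fun i : T => w i)
  rw [hq, hd] at hvar
  have hRT : R - (x m₀)^2 ≤ R2 C b T := hkey ▸ hvar
  have hfrac : R / (S.card * lam) = (1 / (S.card * lam)) * R := by ring
  have : (1 - 1 / (S.card * lam)) * R = R - (1 / (S.card * lam)) * R := by ring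
  rw [this]
  have : (1 / ((S.card : ℝ) * lam)) * R ≥ (x m₀)^2 → R - (1 / (S.card * lam)) * R ≤ R - (x m₀)^2 := by
    intro h; linarith
  exact le_trans (this (by rw [← hfrac]; exact hm₀)) hRT


lemma setR2_finite (C : Matrix (Fin n) (Fin n) ℝ) (b : Fin n → ℝ) (j : ℕ) :
    {x | ∃ S : Finset (Fin n), S.card = j ∧ x = R2 C b S}.Finite := by
  apply Set.Finite.subset (Set.finite_range (fun S : Finset (Fin n) => R2 C b S))
  rintro x ⟨S, -, rfl⟩
  exact ⟨S, rfl⟩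

lemma sup_step {C : Matrix (Fin n) (Fin n) ℝ} (hC : C.PosDef) (hdiag : ∀ i, C i i = 1)
    (b : Fin n → ℝ) {j : ℕ} (h1 : 1 ≤ j) (hjn : j + 1 ≤ n)
    (hpos : 0 < lambdaMinK C (j + 1)) :
    (1 - 1 / (((j:ℝ) + 1) * lambdaMinK C (j + 1))) *
      sSup {x | ∃ S : Finset (Fin n), S.card = j + 1 ∧ x = R2 C b S} ≤
    sSup {x | ∃ S : Finset (Fin n), S.card = j ∧ x = R2 C b S} := by
  have hne : {x | ∃ S : Finset (Fin n), S.card = j + 1 ∧ x = R2 C b S}.Nonempty := by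
    obtain ⟨S, hS⟩ := exists_card_finset (n := n) (j+1) hjn
    exact ⟨R2 C b S, S, hS, rfl⟩
  obtain ⟨S, hScard, hSsup⟩ := hne.csSup_mem (setR2_finite C b (j+1))
  obtain ⟨m, hmS, hstep⟩ := step_lemma hC hdiag b (S := S) (by omega)
  have hlamS : lambdaMinK C (j+1) ≤ lambdaMin (subMat C S) :=
    lambdaMinK_le hC (by omega) hScard
  have hposS : (0:ℝ) < ((j:ℝ)+1) * lambdaMinK C (j+1) := by positivity
  have hfactor : 1 - 1 / (((j:ℝ)+1) * lambdaMinK C (j+1))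
      ≤ 1 - 1 / ((S.card : ℝ) * lambdaMin (subMat C S)) := by
    have hmul : ((j:ℝ)+1) * lambdaMinK C (j+1) ≤ (S.card : ℝ) * lambdaMin (subMat C S) := by
      rw [hScard]
      push_cast
      exact mul_le_mul_of_nonneg_left hlamS (by positivity)
    have := one_div_le_one_div_of_le hposS hmul
    linarith
  have hR0 : 0 ≤ R2 C b S := R2_nonneg hC b S
  have hchain : (1 - 1 / (((j:ℝ)+1) * lambdaMinK C (j+1))) * R2 C b S ≤ R2 C b (S.erase m) :=
    le_trans (mul_le_mul_of_nonneg_right hfactor hR0) hstep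
  rw [hSsup]
  refine le_trans hchain (le_csSup ((setR2_finite C b j).bddAbove) ?_)
  exact ⟨S.erase m, by rw [Finset.card_erase_of_mem hmS, hScard]; omega, rfl⟩

end ShrinkProof

/-- The best `R²` over subsets of size `k′` is at least
`∏_{i=k′+1}^{k} (1 − 1/(i · λmin(C,i)))` times the best `R²` over subsets of size `k`,
provided `(k′+1) · λmin(C,k) ≥ 1`. -/
theorem opt_R2_card_shrink_bound {n k k' : ℕ}
    (C : Matrix (Fin n) (Fin n) ℝ) (b : Fin n → ℝ) (hC : C.PosDef)
    (hdiag : ∀ i, C i i = 1) (hk' : 1 ≤ k') (hk'k : k' < k) (hkn : k ≤ n)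
    (hlam : 1 ≤ (k' + 1 : ℝ) * lambdaMinK C k) :
    (∏ i ∈ Finset.Icc (k' + 1) k, (1 - 1 / (i * lambdaMinK C i))) *
        sSup {x | ∃ S : Finset (Fin n), S.card = k ∧ x = R2 C b S} ≤
      sSup {x | ∃ S : Finset (Fin n), S.card = k' ∧ x = R2 C b S} := by
  classical
  have hlamk : 0 < lambdaMinK C k := by
    nlinarith [hlam, (by positivity : (0:ℝ) < (k':ℝ) + 1)]
  have hlami : ∀ i : ℕ, 1 ≤ i → i ≤ k → lambdaMinK C k ≤ lambdaMinK C i := fun i h1 h2 =>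
    ShrinkProof.lambdaMinK_mono hC h1 h2 hkn
  have hfnonneg : ∀ i ∈ Finset.Icc (k' + 1) k, (0:ℝ) ≤ 1 - 1 / (i * lambdaMinK C i) := by
    intro i hi
    obtain ⟨hi1, hi2⟩ := Finset.mem_Icc.mp hi
    have hli := hlami i (by omega) hi2
    have hge1 : (1:ℝ) ≤ (i:ℝ) * lambdaMinK C i := by
      calc (1:ℝ) ≤ ((k':ℝ) + 1) * lambdaMinK C k := hlam
        _ ≤ (i:ℝ) * lambdaMinK C i := by
            apply mul_le_mul _ hli hlamk.le (by positivity)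
            push_cast
            exact_mod_cast (by exact_mod_cast hi1 : ((k'+1 : ℕ):ℝ) ≤ (i:ℝ))
    have hipos : (0:ℝ) < (i:ℝ) * lambdaMinK C i := lt_of_lt_of_le one_pos hge1
    have : 1 / ((i:ℝ) * lambdaMinK C i) ≤ 1 := by
      rw [div_le_one hipos]; linarith
    linarith
  have hPk0 : 0 ≤ sSup {x | ∃ S : Finset (Fin n), S.card = k ∧ x = R2 C b S} := by
    apply Real.sSup_nonneg
    rintro x ⟨S, -, rfl⟩
    exact ShrinkProof.R2_nonneg hC b S
  have main : ∀ d : ℕ, d ≤ k - k' →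
      (∏ i ∈ Finset.Icc (k - d + 1) k, (1 - 1 / (i * lambdaMinK C i))) *
        sSup {x | ∃ S : Finset (Fin n), S.card = k ∧ x = R2 C b S} ≤
      sSup {x | ∃ S : Finset (Fin n), S.card = k - d ∧ x = R2 C b S} := by
    intro d
    induction d with
    | zero =>
      intro _
      simp
    | succ d ih =>
      intro hd
      have hd' : d ≤ k - k' := by omega
      set j := k - (d + 1) with hj
      have hjk' : k' ≤ j := by omega
      have h1j : 1 ≤ j := le_trans hk' hjk'
      have hjk : j + 1 ≤ k := by omega
      have hkd : k - d = j + 1 := by omega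
      have hIcc : Finset.Icc (j + 1) k = insert (j + 1) (Finset.Icc (j + 2) k) := by
        ext a
        simp only [Finset.mem_Icc, Finset.mem_insert]
        omega
      have hnotmem : (j + 1) ∉ Finset.Icc (j + 2) k := by
        simp
      have hprod_nonneg : (0:ℝ) ≤ ∏ i ∈ Finset.Icc (j + 2) k, (1 - 1 / (i * lambdaMinK C i)) := by
        apply Finset.prod_nonneg
        intro i hi
        apply hfnonneg
        rw [Finset.mem_Icc] at hi ⊢
        omega
      have hfj : (0:ℝ) ≤ 1 - 1 / ((j + 1 : ℕ) * lambdaMinK C (j + 1)) := by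
        apply hfnonneg
        rw [Finset.mem_Icc]
        omega
      have hposj : 0 < lambdaMinK C (j + 1) :=
        lt_of_lt_of_le hlamk (hlami (j + 1) (by omega) hjk)
      have ihcast := ih hd'
      rw [hkd] at ihcast
      have hstep := ShrinkProof.sup_step hC hdiag b h1j (le_trans hjk hkn) hposj
      calc (∏ i ∈ Finset.Icc (j + 1) k, (1 - 1 / (i * lambdaMinK C i))) *
            sSup {x | ∃ S : Finset (Fin n), S.card = k ∧ x = R2 C b S}
          = (1 - 1 / ((j + 1 : ℕ) * lambdaMinK C (j + 1))) *
              ((∏ i ∈ Finset.Icc (j + 2) k, (1 - 1 / (i * lambdaMinK C i))) *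
                sSup {x | ∃ S : Finset (Fin n), S.card = k ∧ x = R2 C b S}) := by
            rw [hIcc, Finset.prod_insert hnotmem, mul_assoc]
        _ ≤ (1 - 1 / ((j + 1 : ℕ) * lambdaMinK C (j + 1))) *
              sSup {x | ∃ S : Finset (Fin n), S.card = j + 1 ∧ x = R2 C b S} := by
            apply mul_le_mul_of_nonneg_left _ hfj
            have : j + 2 = j + 1 + 1 := rfl
            rw [this] at *
            exact ihcast
        _ ≤ sSup {x | ∃ S : Finset (Fin n), S.card = j ∧ x = R2 C b S} := by
            have : ((j + 1 : ℕ) : ℝ) = (j : ℝ) + 1 := by push_cast; ring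
            rw [this]
            exact hstep
  have hfin := main (k - k') le_rfl
  have h1 : k - (k - k') = k' := by omega
  rw [h1] at hfin
  exact hfin
end

section
/- Let A be a real symmetric positive semidefinite (n+1)×(n+1) matrix of the block form A = [[1, bᵀ],[b, C]], where b ∈ ℝⁿ and the n×n block C is positive definite. Then 1 − bᵀ C⁻¹ b ≥ λ_min(A), where λ_min(A) is the smallest eigenvalue of A. In statistical terms: if A is the covariance matrix of normalized variables Z, X₁, …, X_n, then Var(Res(Z | {X₁,…,X_n})) ≥ λ_min(A). -/
open scoped Matrix

lemma psd_sub_lambdaMin {m : Type*} [Fintype m] [DecidableEq m] [Nonempty m]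
    {A : Matrix m m ℝ} (hA : A.IsHermitian) :
    (A - (⨅ i, hA.eigenvalues i) • (1 : Matrix m m ℝ)).PosSemidef := by
  set c := ⨅ i, hA.eigenvalues i with hc
  set U : Matrix m m ℝ := (hA.eigenvectorUnitary : Matrix m m ℝ) with hUdef
  have hU : U * star U = 1 := Matrix.mem_unitaryGroup_iff.mp hA.eigenvectorUnitary.2
  have key : A - c • 1 = U * Matrix.diagonal (fun i => hA.eigenvalues i - c) * star U := by
    have h1 : (c • (1 : Matrix m m ℝ)) = U * (c • 1) * star U := by
      rw [Matrix.mul_smul, Matrix.smul_mul, mul_one, hU]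
    calc A - c • 1 = U * Matrix.diagonal (RCLike.ofReal ∘ hA.eigenvalues) * star U - U * (c • 1) * star U := by
            rw [← h1]; congr 1; exact hA.spectral_theorem
      _ = U * (Matrix.diagonal (RCLike.ofReal ∘ hA.eigenvalues) - c • 1) * star U := by
            rw [Matrix.mul_sub, Matrix.sub_mul]
      _ = U * Matrix.diagonal (fun i => hA.eigenvalues i - c) * star U := by
            congr 1; congr 1
            ext i j
            by_cases h : i = j <;>
              simp [Matrix.diagonal_apply, Matrix.one_apply, h, Matrix.sub_apply]
  rw [key]
  exact (Matrix.posSemidef_diagonal_iff.mpr fun i =>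
    sub_nonneg.mpr (ciInf_le (Set.Finite.bddBelow (Set.finite_range _)) i)).mul_mul_conjTranspose_same U

/-- Residual variance lower bound: for a positive semidefinite matrix
`A = [[1, bᵀ],[b, C]]` (with `A₀₀ = 1` and positive definite lower-right block `C`),
`1 − bᵀ C⁻¹ b ≥ λ_min(A)`. -/
theorem residual_variance_ge_lambdaMin {n : ℕ}
    (A : Matrix (Fin (n + 1)) (Fin (n + 1)) ℝ) (hA : A.PosSemidef)
    (h00 : A 0 0 = 1) (hC : (A.submatrix Fin.succ Fin.succ).PosDef) :
    lambdaMin A ≤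
      1 - (fun i : Fin n => A i.succ 0) ⬝ᵥ
          ((A.submatrix Fin.succ Fin.succ)⁻¹ *ᵥ fun i : Fin n => A i.succ 0) := by
  classical
  have hH : A.IsHermitian := hA.1
  rw [lambdaMin, dif_pos hH]
  set c := ⨅ i, hH.eigenvalues i with hc
  set b : Fin n → ℝ := fun i => A i.succ 0 with hb
  set C := A.submatrix Fin.succ Fin.succ with hCdef
  set w : Fin n → ℝ := C⁻¹ *ᵥ b with hw
  set x : Fin (n+1) → ℝ := Fin.cons 1 (-w) with hxdef
  have hCw : C *ᵥ w = b := by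
    rw [hw, Matrix.mulVec_mulVec, Matrix.mul_nonsing_inv C (isUnit_iff_ne_zero.mpr hC.det_pos.ne'),
      Matrix.one_mulVec]
  have hsym : ∀ j : Fin n, A 0 j.succ = b j := by
    intro j
    have := congrFun (congrFun hH 0) j.succ
    simpa [Matrix.conjTranspose_apply] using this.symm
  have h1 : ∀ i : Fin n, (A *ᵥ x) i.succ = 0 := by
    intro i
    have : (A *ᵥ x) i.succ = b i - (C *ᵥ w) i := by
      simp only [Matrix.mulVec, dotProduct, Fin.sum_univ_succ, hxdef, Fin.cons_zero,
        Fin.cons_succ, hCdef, Matrix.submatrix_apply, Pi.neg_apply, mul_neg, mul_one,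
        ← Finset.sum_neg_distrib]
      rw [sub_eq_add_neg, ← Finset.sum_neg_distrib]
    rw [this, hCw, sub_self]
  have h0 : (A *ᵥ x) 0 = 1 - b ⬝ᵥ w := by
    simp only [Matrix.mulVec, dotProduct, Fin.sum_univ_succ, hxdef, Fin.cons_zero,
      Fin.cons_succ, h00, Pi.neg_apply, mul_neg, mul_one]
    rw [sub_eq_add_neg, ← Finset.sum_neg_distrib]
    congr 1
    exact Finset.sum_congr rfl fun j _ => by rw [hsym j]
  have hQ : x ⬝ᵥ (A *ᵥ x) = 1 - b ⬝ᵥ w := by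
    rw [dotProduct, Fin.sum_univ_succ]
    simp only [h0, h1, mul_zero, Finset.sum_const_zero, add_zero]
    simp [hxdef]
  have hxx : (1 : ℝ) ≤ x ⬝ᵥ x := by
    rw [dotProduct, Fin.sum_univ_succ]
    simp only [hxdef, Fin.cons_zero, Fin.cons_succ, mul_one, Pi.neg_apply, neg_mul_neg]
    have : (0:ℝ) ≤ ∑ i : Fin n, w i * w i :=
      Finset.sum_nonneg fun i _ => mul_self_nonneg _
    linarith
  have hc0 : 0 ≤ c := le_ciInf fun i => hA.eigenvalues_nonneg i
  have hpsd := psd_sub_lambdaMin hH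
  have hx := hpsd.dotProduct_mulVec_nonneg x
  have hexp : (star x) ⬝ᵥ ((A - c • 1) *ᵥ x) = x ⬝ᵥ (A *ᵥ x) - c * (x ⬝ᵥ x) := by
    rw [Matrix.sub_mulVec, dotProduct_sub, Matrix.smul_mulVec, Matrix.one_mulVec,
      dotProduct_smul, smul_eq_mul]
    congr 1
  rw [hexp] at hx
  nlinarith [mul_le_mul_of_nonneg_left hxx hc0]
end
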